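/- sin(2π/15)/sin(π/15) - sin(7π/15)/sin(4π/15) - sin(3π/15)/sin(6π/15) = 0. -/

import Mathlib

open Real

theorem stmt_7 :
    Real.sin (2 * π / 15) / Real.sin (π / 15)
      - Real.sin (7 * π / 15) / Real.sin (4 * π / 15)
      - Real.sin (3 * π / 15) / Real.sin (6 * π / 15) = 0 := by
  have pi_pos := Real.pi_pos
  have h1 : Real.sin (π / 15) ≠ 0 :=
    ne_of_gt (Real.sin_pos_of_pos_of_lt_pi (by linarith) (by linarith))
  have h2 : Real.sin (4 * π / 15) ≠ 0 :=
    ne_of_gt (Real.sin_pos_of_pos_of_lt_pi (by linarith) (by linarith))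
  have h3 : Real.sin (6 * π / 15) ≠ 0 :=
    ne_of_gt (Real.sin_pos_of_pos_of_lt_pi (by linarith) (by linarith))
  have e1 : Real.sin (2 * π / 15) / Real.sin (π / 15) = 2 * Real.cos (π / 15) := by
    rw [show (2 * π / 15 : ℝ) = 2 * (π / 15) by ring, Real.sin_two_mul]
    field_simp
  have e2 : Real.sin (7 * π / 15) / Real.sin (4 * π / 15) = 2 * Real.cos (4 * π / 15) := by
    rw [show (7 * π / 15 : ℝ) = π - 2 * (4 * π / 15) by ring, Real.sin_pi_sub,
      Real.sin_two_mul]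
    field_simp
  have e3 : Real.sin (3 * π / 15) / Real.sin (6 * π / 15) = 2 * Real.cos (6 * π / 15) := by
    rw [show (3 * π / 15 : ℝ) = π - 2 * (6 * π / 15) by ring, Real.sin_pi_sub,
      Real.sin_two_mul]
    field_simp
  rw [e1, e2, e3]
  have hc : Real.cos (π / 15) - Real.cos (4 * π / 15) = Real.sin (π / 10) := by
    rw [Real.cos_sub_cos]
    rw [show (π / 15 + 4 * π / 15) / 2 = π / 6 by ring,
      show (π / 15 - 4 * π / 15) / 2 = -(π / 10) by ring,
      Real.sin_neg, Real.sin_pi_div_six]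
    ring
  have hc2 : Real.cos (6 * π / 15) = Real.sin (π / 10) := by
    rw [show (6 * π / 15 : ℝ) = π / 2 - π / 10 by ring, Real.cos_pi_div_two_sub]
  linarith
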